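/- Every connected simple outerplanar graph with minimum degree at least 2 is a spanning subgraph of a 2-connected outerplanar graph on the same vertex set (i.e., one whose outer face boundary is a cycle). -/

import Mathlib

/-- An incidence of `G` is a pair `(v, vw)` with `G.Adj v w`, encoded as the ordered pair
`(v, w)`.  Two incidences `(v, vw)` and `(v', v'w')` are adjacent if `v = v'`, `w = v'`
or `v = w'`.  A `(k, l)`-incidence coloring is a proper coloring of the incidences with at
most `k` colors such that for every vertex `v` at most `l` colors appear on the incoming
incidences `(u, uv)`. -/
def IsIncColoring {V : Type*} (G : SimpleGraph V) (k l : ℕ) (c : V → V → Fin k) : Prop :=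
  (∀ v w v' w' : V, G.Adj v w → G.Adj v' w' → (v, w) ≠ (v', w') →
      (v = v' ∨ w = v' ∨ v = w') → c v w ≠ c v' w') ∧
  (∀ v : V, {x : Fin k | ∃ u, G.Adj u v ∧ c u v = x}.ncard ≤ l)

/-- `G` has a `(k, l)`-incidence coloring. -/
def HasIncColoring {V : Type*} (G : SimpleGraph V) (k l : ℕ) : Prop :=
  ∃ c : V → V → Fin k, IsIncColoring G k l c

/-- A graph is outerplanar iff it has a one-page book embedding: the vertices can be placed
(injectively) on a line so that no two edges interleave. -/
def Outerplanar {V : Type*} (G : SimpleGraph V) : Prop :=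
  ∃ f : V → ℝ, Function.Injective f ∧
    ∀ a b c d : V, G.Adj a b → G.Adj c d →
      ¬(f a < f c ∧ f c < f b ∧ f b < f d)

/-- Every connected outerplanar graph with minimum degree at least 2 is a spanning
subgraph of a 2-connected outerplanar graph on the same vertex set. -/
theorem stmt_11 {V : Type*} [Fintype V] [DecidableEq V] (G : SimpleGraph V)
    [DecidableRel G.Adj] (hconn : G.Connected) (hmin : ∀ v, 2 ≤ G.degree v)
    (hout : Outerplanar G) :
    ∃ H : SimpleGraph V, G ≤ H ∧ Outerplanar H ∧
      3 ≤ Fintype.card V ∧ ∀ u : V, (H.induce {x | x ≠ u}).Connected := by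
  obtain ⟨f, hf, hop⟩ := hout
  letI : LinearOrder V := LinearOrder.lift' f hf
  have hlt : ∀ a b : V, a < b ↔ f a < f b := fun _ _ => Iff.rfl
  have hne : Nonempty V := hconn.nonempty
  have huniv : (Finset.univ : Finset V).Nonempty := Finset.univ_nonempty
  set m := Finset.univ.min' huniv with hm
  set M := Finset.univ.max' huniv with hM
  have hmle : ∀ x : V, m ≤ x := fun x => Finset.min'_le _ x (Finset.mem_univ x)
  have hleM : ∀ x : V, x ≤ M := fun x => Finset.le_max' _ x (Finset.mem_univ x)
  have hcard : 3 ≤ Fintype.card V := by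
    obtain ⟨v⟩ := hne
    have h1 := G.degree_lt_card_verts v
    have h2 := hmin v
    omega
  have hmM : m < M := by
    rcases lt_or_ge m M with h | h
    · exact h
    · exfalso
      have : Fintype.card V ≤ 1 := Fintype.card_le_one_iff.2 fun a b =>
        le_antisymm (le_trans (hleM a) (h.trans (hmle b)))
          (le_trans (hleM b) (h.trans (hmle a)))
      omega
  set C : SimpleGraph V :=
    { Adj := fun u v => u ⋖ v ∨ v ⋖ u ∨ (u = m ∧ v = M) ∨ (u = M ∧ v = m)
      symm := by
        constructor; intro u v h
        rcases h with h | h | ⟨rfl, rfl⟩ | ⟨rfl, rfl⟩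
        · exact Or.inr (Or.inl h)
        · exact Or.inl h
        · exact Or.inr (Or.inr (Or.inr ⟨rfl, rfl⟩))
        · exact Or.inr (Or.inr (Or.inl ⟨rfl, rfl⟩))
      loopless := by
        constructor; intro u h
        rcases h with h | h | ⟨rfl, h⟩ | ⟨rfl, h⟩
        · exact h.lt.ne rfl
        · exact h.lt.ne rfl
        · exact hmM.ne h
        · exact hmM.ne h.symm } with hC
  set H := G ⊔ C with hH
  have hCadj : ∀ u v : V, C.Adj u v ↔
      (u ⋖ v ∨ v ⋖ u ∨ (u = m ∧ v = M) ∨ (u = M ∧ v = m)) := fun _ _ => Iff.rfl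
  refine ⟨H, le_sup_left, ⟨f, hf, ?_⟩, hcard, ?_⟩
  · -- outerplanarity
    rintro a b c d hab hcd ⟨h1, h2, h3⟩
    rw [← hlt] at h1 h2 h3
    rcases hab with hab | hab
    · rcases hcd with hcd | hcd
      · exact hop a b c d hab hcd ⟨(hlt _ _).1 h1, (hlt _ _).1 h2, (hlt _ _).1 h3⟩
      · rcases (hCadj c d).1 hcd with h | h | ⟨rfl, rfl⟩ | ⟨rfl, rfl⟩
        · exact h.2 h2 h3
        · exact absurd (h2.trans h3) h.lt.asymm
        · exact absurd (hmle a) (not_le.2 h1)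
        · exact absurd (hleM b) (not_le.2 h2)
    · rcases (hCadj a b).1 hab with h | h | ⟨rfl, rfl⟩ | ⟨rfl, rfl⟩
      · exact h.2 h1 h2
      · exact absurd (h1.trans h2) h.lt.asymm
      · exact absurd (hleM d) (not_le.2 h3)
      · exact absurd (hleM c) (not_le.2 h1)
  · -- 2-connectivity
    intro u
    -- interval walk lemma
    have key : ∀ (n : ℕ) (x y : V) (hx : x ≠ u) (hy : y ≠ u), x ≤ y →
        (∀ z, x ≤ z → z ≤ y → z ≠ u) →
        (Finset.univ.filter (fun w => x < w ∧ w ≤ y)).card ≤ n →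
        (H.induce {x : V | x ≠ u}).Reachable ⟨x, hx⟩ ⟨y, hy⟩ := by
      intro n
      induction n with
      | zero =>
        intro x y hx hy hxy hmid hcn
        rcases eq_or_lt_of_le hxy with rfl | hlt'
        · rfl
        · exfalso
          have : y ∈ Finset.univ.filter (fun w => x < w ∧ w ≤ y) := by
            simp [hlt']
          have := Finset.card_pos.2 ⟨y, this⟩
          omega
      | succ n ih =>
        intro x y hx hy hxy hmid hcn
        rcases eq_or_lt_of_le hxy with rfl | hlt'
        · rfl
        · set S := Finset.univ.filter (fun w => x < w ∧ w ≤ y) with hS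
          have hSne : S.Nonempty := ⟨y, by simp [hS, hlt']⟩
          set z := S.min' hSne with hz
          have hzmem : z ∈ S := S.min'_mem hSne
          have hzp : x < z ∧ z ≤ y := by simpa [hS] using hzmem
          have hcov : x ⋖ z := by
            refine ⟨hzp.1, fun w hw hwz => ?_⟩
            have : w ∈ S := by
              simp only [hS, Finset.mem_filter, Finset.mem_univ, true_and]
              exact ⟨hw, hwz.le.trans hzp.2⟩
            exact absurd (S.min'_le w this) (not_le.2 hwz)
          have hzu : z ≠ u := hmid z hzp.1.le hzp.2
          have hadj : (H.induce {x : V | x ≠ u}).Adj ⟨x, hx⟩ ⟨z, hzu⟩ := by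
            show H.Adj x z
            exact Or.inr (Or.inl hcov)
          refine hadj.reachable.trans (ih z y hzu hy hzp.2
            (fun w hw1 hw2 => hmid w (hzp.1.le.trans hw1) hw2) ?_)
          have hsub : Finset.univ.filter (fun w => z < w ∧ w ≤ y) ⊆ S.erase z := by
            intro w hw
            simp only [Finset.mem_filter, Finset.mem_univ, true_and] at hw
            refine Finset.mem_erase.2 ⟨hw.1.ne', ?_⟩
            · simp only [hS, Finset.mem_filter, Finset.mem_univ, true_and]
              exact ⟨hzp.1.trans hw.1, hw.2⟩
          have h1 := Finset.card_le_card hsub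
          have h2 := Finset.card_erase_of_mem hzmem
          omega
    have keyLE : ∀ (x y : V) (hx : x ≠ u) (hy : y ≠ u), x ≤ y →
        (∀ z, x ≤ z → z ≤ y → z ≠ u) →
        (H.induce {x : V | x ≠ u}).Reachable ⟨x, hx⟩ ⟨y, hy⟩ := by
      intro x y hx hy hxy hmid
      exact key (Fintype.card V) x y hx hy hxy hmid
        (le_trans (Finset.card_le_card (Finset.filter_subset _ _)) (le_of_eq (Finset.card_univ)))
    -- pairwise along same side of u
    have side : ∀ (a b : V) (ha : a ≠ u) (hb : b ≠ u),
        ((a < u ∧ b < u) ∨ (u < a ∧ u < b)) →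
        (H.induce {x : V | x ≠ u}).Reachable ⟨a, ha⟩ ⟨b, hb⟩ := by
      intro a b ha hb hside
      rcases le_total a b with hab | hab
      · refine keyLE a b ha hb hab fun z hz1 hz2 => ?_
        rcases hside with ⟨h1, h2⟩ | ⟨h1, h2⟩
        · exact (lt_of_le_of_lt hz2 h2).ne
        · exact (lt_of_lt_of_le h1 hz1).ne'
      · refine (keyLE b a hb ha hab fun z hz1 hz2 => ?_).symm
        rcases hside with ⟨h1, h2⟩ | ⟨h1, h2⟩
        · exact (lt_of_le_of_lt hz2 h1).ne
        · exact (lt_of_lt_of_le h2 hz1).ne'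
    -- reach between the two sides via m -- M edge
    have cross : ∀ (a b : V) (ha : a ≠ u) (hb : b ≠ u), a < u → u < b →
        (H.induce {x : V | x ≠ u}).Reachable ⟨a, ha⟩ ⟨b, hb⟩ := by
      intro a b ha hb hau hub
      have hmu : m ≠ u := ((hmle a).trans_lt hau).ne
      have hMu : M ≠ u := (hub.trans_le (hleM b)).ne'
      have r1 : (H.induce {x : V | x ≠ u}).Reachable ⟨m, hmu⟩ ⟨a, ha⟩ :=
        keyLE m a hmu ha (hmle a) fun z _ hz2 => (hz2.trans_lt hau).ne
      have r2 : (H.induce {x : V | x ≠ u}).Reachable ⟨b, hb⟩ ⟨M, hMu⟩ :=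
        keyLE b M hb hMu (hleM b) fun z hz1 _ => (hub.trans_le hz1).ne'
      have hadj : (H.induce {x : V | x ≠ u}).Adj ⟨m, hmu⟩ ⟨M, hMu⟩ := by
        show H.Adj m M
        exact Or.inr (Or.inr (Or.inr (Or.inl ⟨rfl, rfl⟩)))
      exact r1.symm.trans (hadj.reachable.trans r2.symm)
    rw [SimpleGraph.connected_iff]
    constructor
    · rintro ⟨a, ha⟩ ⟨b, hb⟩
      have ha' : a ≠ u := ha
      have hb' : b ≠ u := hb
      rcases lt_trichotomy a u with hau | rfl | hua
      · rcases lt_trichotomy b u with hbu | rfl | hub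
        · exact side a b ha' hb' (Or.inl ⟨hau, hbu⟩)
        · exact absurd rfl hb'
        · exact cross a b ha' hb' hau hub
      · exact absurd rfl ha'
      · rcases lt_trichotomy b u with hbu | rfl | hub
        · exact (cross b a hb' ha' hbu hua).symm
        · exact absurd rfl hb'
        · exact side a b ha' hb' (Or.inr ⟨hua, hub⟩)
    · obtain ⟨v, hv⟩ := Fintype.exists_ne_of_one_lt_card (by omega) u
      exact ⟨⟨v, hv⟩⟩
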